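/- Let Φ ⊂ ℝ³ (standard Euclidean inner product) be the 30-element set consisting of all permutations of (±1, 0, 0) together with all even permutations of (±1/2, ±φ/2, ±φ⁻¹/2). Then: (i) Φ = −Φ; (ii) every α ∈ Φ satisfies ⟨α,α⟩ = 1; (iii) for all α, β ∈ Φ the reflection image β − 2⟨β,α⟩·α again lies in Φ; (iv) for all α, β ∈ Φ the Cartan coefficient 2⟨β,α⟩ lies in ℤ + ℤφ ⊂ ℝ. This is the H₃ root system, whose roots are the vertices of the icosidodecahedron. -/

import Mathlib

noncomputable def φ : ℝ := (1 + Real.sqrt 5) / 2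

/-- The golden integer ring `ℤ + ℤφ` as a subset of `ℝ`. -/
def Zφ : Set ℝ := {x | ∃ a b : ℤ, x = (a : ℝ) + (b : ℝ) * φ}

/-- Standard inner product on `ℝ³`. -/
def dot3 (x y : Fin 3 → ℝ) : ℝ := ∑ i, x i * y i

/-- The `H₃` root system: all permutations of `(±1, 0, 0)` together with all
even (cyclic) permutations of `(±1/2, ±φ/2, ±φ⁻¹/2)`. -/
noncomputable def H3 : Set (Fin 3 → ℝ) :=
  {v | ∃ (i : Fin 3) (ε : ℝ), (ε = 1 ∨ ε = -1) ∧ v = fun j => if j = i then ε else 0} ∪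
  {v | ∃ (σ : Equiv.Perm (Fin 3)) (ε₁ ε₂ ε₃ : ℝ),
        Equiv.Perm.sign σ = 1 ∧
        (ε₁ = 1 ∨ ε₁ = -1) ∧ (ε₂ = 1 ∨ ε₂ = -1) ∧ (ε₃ = 1 ∨ ε₃ = -1) ∧
        v = (![ε₁ / 2, ε₂ * φ / 2, ε₃ * φ⁻¹ / 2]) ∘ σ}

/- ## Auxiliary facts about φ -/

lemma phi_pos : 0 < φ := by
  unfold φ; have := Real.sqrt_nonneg 5; linarith

lemma phi_sq : φ ^ 2 = φ + 1 := by
  have h5 : Real.sqrt 5 ^ 2 = 5 := Real.sq_sqrt (by norm_num)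
  unfold φ; nlinarith [h5]

lemma phi_inv : φ⁻¹ = φ - 1 := by
  have h0 : φ ≠ 0 := ne_of_gt phi_pos
  field_simp; nlinarith [phi_sq]

lemma phi_irr : Irrational φ := by
  have h : Irrational (Real.sqrt 5) := (Nat.prime_five).irrational_sqrt
  unfold φ
  have h1 : Irrational (1 + Real.sqrt 5) := by simpa using h.ratCast_add (q := 1)
  simpa using h1.div_natCast (by norm_num : (2:ℕ) ≠ 0)

/- ## The golden-integer encoding -/

abbrev G := ℤ × ℤ

def gmul (x y : G) : G := (x.1*y.1 + x.2*y.2, x.1*y.2 + x.2*y.1 + x.2*y.2)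

noncomputable def toR (x : G) : ℝ := (x.1 : ℝ) + (x.2 : ℝ) * φ

lemma toR_add (x y : G) : toR (x + y) = toR x + toR y := by
  simp [toR]; ring

lemma toR_sub (x y : G) : toR (x - y) = toR x - toR y := by
  simp [toR]; ring

lemma toR_neg (x : G) : toR (-x) = - toR x := by
  simp [toR]; ring

lemma toR_mul (x y : G) : toR (gmul x y) = toR x * toR y := by
  unfold toR gmul; push_cast
  linear_combination (-(x.2 : ℝ) * y.2) * phi_sq

lemma toR_inj (x y : G) (h : toR x = toR y) : x = y := by
  have key : ∀ a b : ℤ, (a:ℝ) + b * φ = 0 → a = 0 ∧ b = 0 := by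
    intro a b hab
    by_cases hb : b = 0
    · subst hb; simp at hab; exact ⟨by exact_mod_cast hab, rfl⟩
    · exfalso
      apply phi_irr
      refine ⟨(-a : ℚ)/b, ?_⟩
      have hb' : (b : ℝ) ≠ 0 := Int.cast_ne_zero.mpr hb
      push_cast
      field_simp
      linarith
  obtain ⟨h1, h2⟩ := key (x.1 - y.1) (x.2 - y.2)
    (by unfold toR at h; push_cast; linarith)
  exact Prod.ext (by omega) (by omega)

/- ## Encoded vectors -/

abbrev V := G × G × G

noncomputable def toV (v : V) : Fin 3 → ℝ := ![toR v.1 / 2, toR v.2.1 / 2, toR v.2.2 / 2]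

def dotE (s t : V) : G := gmul s.1 t.1 + gmul s.2.1 t.2.1 + gmul s.2.2 t.2.2

def hdE (s t : V) : G := ((dotE t s).1 / 2, (dotE t s).2 / 2)

def reflE (s t : V) : V :=
  (t.1 - gmul (hdE s t) s.1, t.2.1 - gmul (hdE s t) s.2.1, t.2.2 - gmul (hdE s t) s.2.2)

def axE (e : ℤ) : List V :=
  [((2*e,0),(0,0),(0,0)), ((0,0),(2*e,0),(0,0)), ((0,0),(0,0),(2*e,0))]
def cycE (e1 e2 e3 : ℤ) : List V :=
  [((e1,0),(0,e2),(-e3,e3)), ((0,e2),(-e3,e3),(e1,0)), ((-e3,e3),(e1,0),(0,e2))]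
def L : List V :=
  axE 1 ++ axE (-1) ++
  cycE 1 1 1 ++ cycE 1 1 (-1) ++ cycE 1 (-1) 1 ++ cycE 1 (-1) (-1) ++
  cycE (-1) 1 1 ++ cycE (-1) 1 (-1) ++ cycE (-1) (-1) 1 ++ cycE (-1) (-1) (-1)

lemma L_nodup : L.Nodup := by decide
lemma L_neg : ∀ v ∈ L, -v ∈ L := by decide
lemma L_unit : ∀ v ∈ L, dotE v v = (4, 0) := by decide
lemma L_even : ∀ s ∈ L, ∀ t ∈ L, (dotE t s).1 % 2 = 0 ∧ (dotE t s).2 % 2 = 0 := by decide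
lemma L_refl : ∀ s ∈ L, ∀ t ∈ L, reflE s t ∈ L := by decide

lemma memL0 (e1 e2 e3 : ℤ) (h1 : e1 = 1 ∨ e1 = -1) (h2 : e2 = 1 ∨ e2 = -1)
    (h3 : e3 = 1 ∨ e3 = -1) : (((e1,0),(0,e2),(-e3,e3)) : V) ∈ L := by
  rcases h1 with rfl|rfl <;> rcases h2 with rfl|rfl <;> rcases h3 with rfl|rfl <;> decide
lemma memL1 (e1 e2 e3 : ℤ) (h1 : e1 = 1 ∨ e1 = -1) (h2 : e2 = 1 ∨ e2 = -1)
    (h3 : e3 = 1 ∨ e3 = -1) : (((0,e2),(-e3,e3),(e1,0)) : V) ∈ L := by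
  rcases h1 with rfl|rfl <;> rcases h2 with rfl|rfl <;> rcases h3 with rfl|rfl <;> decide
lemma memL2 (e1 e2 e3 : ℤ) (h1 : e1 = 1 ∨ e1 = -1) (h2 : e2 = 1 ∨ e2 = -1)
    (h3 : e3 = 1 ∨ e3 = -1) : (((-e3,e3),(e1,0),(0,e2)) : V) ∈ L := by
  rcases h1 with rfl|rfl <;> rcases h2 with rfl|rfl <;> rcases h3 with rfl|rfl <;> decide
lemma memLax (e : ℤ) (he : e = 1 ∨ e = -1) : ∀ v ∈ axE e, v ∈ L := by
  rcases he with rfl|rfl <;> decide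

/- ## The permutations -/

def c3 : Equiv.Perm (Fin 3) := ⟨![1,2,0], ![2,0,1], by decide, by decide⟩

lemma sign_class : ∀ σ : Equiv.Perm (Fin 3), Equiv.Perm.sign σ = 1 →
    σ = 1 ∨ σ = c3 ∨ σ = c3 * c3 := by decide

lemma sign_c3 : Equiv.Perm.sign c3 = 1 := by decide
lemma sign_c3sq : Equiv.Perm.sign (c3 * c3) = 1 := by decide

lemma toV_cyc0 (e1 e2 e3 : ℤ) :
    toV ((e1,0),(0,e2),(-e3,e3)) =
      ![(e1:ℝ)/2, (e2:ℝ)*φ/2, (e3:ℝ)*φ⁻¹/2] ∘ ⇑(1 : Equiv.Perm (Fin 3)) := by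
  funext j; fin_cases j <;> simp [toV, toR, phi_inv] <;> push_cast <;> ring

lemma toV_cyc1 (e1 e2 e3 : ℤ) :
    toV ((0,e2),(-e3,e3),(e1,0)) =
      ![(e1:ℝ)/2, (e2:ℝ)*φ/2, (e3:ℝ)*φ⁻¹/2] ∘ ⇑c3 := by
  funext j; fin_cases j <;> simp [toV, toR, phi_inv, c3] <;> push_cast <;> ring

lemma toV_cyc2 (e1 e2 e3 : ℤ) :
    toV ((-e3,e3),(e1,0),(0,e2)) =
      ![(e1:ℝ)/2, (e2:ℝ)*φ/2, (e3:ℝ)*φ⁻¹/2] ∘ ⇑(c3 * c3) := by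
  funext j; fin_cases j <;> simp [toV, toR, phi_inv, c3] <;> push_cast <;> ring

/- ## H3 as the image of the list -/

lemma H3_eq : H3 = toV '' {v : V | v ∈ L} := by
  have E : ∀ (ε : ℝ), (ε = 1 ∨ ε = -1) → ∃ e : ℤ, (e = 1 ∨ e = -1) ∧ (e:ℝ) = ε := by
    rintro ε (rfl|rfl)
    exacts [⟨1, Or.inl rfl, by norm_num⟩, ⟨-1, Or.inr rfl, by norm_num⟩]
  ext x
  constructor
  · rintro (⟨i, ε, hε, rfl⟩ | ⟨σ, ε₁, ε₂, ε₃, hσ, h1, h2, h3, rfl⟩)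
    · obtain ⟨e, he, hce⟩ := E ε hε
      fin_cases i
      · refine ⟨((2*e,0),(0,0),(0,0)), memLax e he _ (by simp [axE]), ?_⟩
        funext j; fin_cases j <;> simp [toV, toR, ← hce] <;> push_cast <;> ring
      · refine ⟨((0,0),(2*e,0),(0,0)), memLax e he _ (by simp [axE]), ?_⟩
        funext j; fin_cases j <;> simp [toV, toR, ← hce] <;> push_cast <;> ring
      · refine ⟨((0,0),(0,0),(2*e,0)), memLax e he _ (by simp [axE]), ?_⟩
        funext j; fin_cases j <;> simp [toV, toR, ← hce] <;> push_cast <;> ring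
    · obtain ⟨e1, he1, hc1⟩ := E ε₁ h1
      obtain ⟨e2, he2, hc2⟩ := E ε₂ h2
      obtain ⟨e3, he3, hc3⟩ := E ε₃ h3
      rcases sign_class σ hσ with rfl | rfl | rfl
      · exact ⟨((e1,0),(0,e2),(-e3,e3)), memL0 e1 e2 e3 he1 he2 he3,
          by rw [toV_cyc0, hc1, hc2, hc3]⟩
      · exact ⟨((0,e2),(-e3,e3),(e1,0)), memL1 e1 e2 e3 he1 he2 he3,
          by rw [toV_cyc1, hc1, hc2, hc3]⟩
      · exact ⟨((-e3,e3),(e1,0),(0,e2)), memL2 e1 e2 e3 he1 he2 he3,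
          by rw [toV_cyc2, hc1, hc2, hc3]⟩
  · rintro ⟨v, hv, rfl⟩
    have hax : ∀ e : ℤ, (e = 1 ∨ e = -1) → ∀ w ∈ axE e, toV w ∈ H3 := by
      intro e he w hw
      have hcast : ((e:ℝ) = 1 ∨ (e:ℝ) = -1) := by rcases he with rfl|rfl <;> norm_num
      fin_cases hw
      · exact Or.inl ⟨0, (e:ℝ), hcast, by
          funext j; fin_cases j <;> simp [toV, toR] <;> push_cast <;> ring⟩
      · exact Or.inl ⟨1, (e:ℝ), hcast, by
          funext j; fin_cases j <;> simp [toV, toR] <;> push_cast <;> ring⟩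
      · exact Or.inl ⟨2, (e:ℝ), hcast, by
          funext j; fin_cases j <;> simp [toV, toR] <;> push_cast <;> ring⟩
    have hcyc : ∀ e1 e2 e3 : ℤ, (e1 = 1 ∨ e1 = -1) → (e2 = 1 ∨ e2 = -1) →
        (e3 = 1 ∨ e3 = -1) → ∀ w ∈ cycE e1 e2 e3, toV w ∈ H3 := by
      intro e1 e2 e3 h1 h2 h3 w hw
      have hcast1 : ((e1:ℝ) = 1 ∨ (e1:ℝ) = -1) := by rcases h1 with rfl|rfl <;> norm_num
      have hcast2 : ((e2:ℝ) = 1 ∨ (e2:ℝ) = -1) := by rcases h2 with rfl|rfl <;> norm_num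
      have hcast3 : ((e3:ℝ) = 1 ∨ (e3:ℝ) = -1) := by rcases h3 with rfl|rfl <;> norm_num
      fin_cases hw
      · exact Or.inr ⟨1, (e1:ℝ), (e2:ℝ), (e3:ℝ), by simp, hcast1, hcast2, hcast3,
          toV_cyc0 e1 e2 e3⟩
      · exact Or.inr ⟨c3, (e1:ℝ), (e2:ℝ), (e3:ℝ), sign_c3, hcast1, hcast2, hcast3,
          toV_cyc1 e1 e2 e3⟩
      · exact Or.inr ⟨c3 * c3, (e1:ℝ), (e2:ℝ), (e3:ℝ), sign_c3sq, hcast1, hcast2, hcast3,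
          toV_cyc2 e1 e2 e3⟩
    simp only [L, List.mem_append] at hv
    rcases hv with ((((((((h|h)|h)|h)|h)|h)|h)|h)|h)|h
    · exact hax 1 (Or.inl rfl) _ h
    · exact hax (-1) (Or.inr rfl) _ h
    · exact hcyc 1 1 1 (Or.inl rfl) (Or.inl rfl) (Or.inl rfl) _ h
    · exact hcyc 1 1 (-1) (Or.inl rfl) (Or.inl rfl) (Or.inr rfl) _ h
    · exact hcyc 1 (-1) 1 (Or.inl rfl) (Or.inr rfl) (Or.inl rfl) _ h
    · exact hcyc 1 (-1) (-1) (Or.inl rfl) (Or.inr rfl) (Or.inr rfl) _ h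
    · exact hcyc (-1) 1 1 (Or.inr rfl) (Or.inl rfl) (Or.inl rfl) _ h
    · exact hcyc (-1) 1 (-1) (Or.inr rfl) (Or.inl rfl) (Or.inr rfl) _ h
    · exact hcyc (-1) (-1) 1 (Or.inr rfl) (Or.inr rfl) (Or.inl rfl) _ h
    · exact hcyc (-1) (-1) (-1) (Or.inr rfl) (Or.inr rfl) (Or.inr rfl) _ h

/- ## Structure lemmas for toV -/

lemma toV_inj : Function.Injective toV := by
  intro x y h
  have h0 := congrFun h 0
  have h1 := congrFun h 1
  have h2 := congrFun h 2
  simp [toV] at h0 h1 h2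
  exact Prod.ext (toR_inj _ _ (by linarith))
    (Prod.ext (toR_inj _ _ (by linarith)) (toR_inj _ _ (by linarith)))

lemma toV_neg (v : V) : -toV v = toV (-v) := by
  funext j; fin_cases j <;> simp [toV, toR_neg] <;> ring

lemma dot3_toV (s t : V) : dot3 (toV s) (toV t) = toR (dotE s t) / 4 := by
  simp [dot3, Fin.sum_univ_three, toV, dotE, toR_add, toR_mul]; ring

lemma hcd (s t : V) (hs : s ∈ L) (ht : t ∈ L) :
    toR (dotE t s) = 2 * toR (hdE s t) := by
  obtain ⟨h1, h2⟩ := L_even s hs t ht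
  unfold toR hdE
  have e1 : ((dotE t s).1 : ℝ) = 2 * (((dotE t s).1 / 2 : ℤ) : ℝ) := by
    exact_mod_cast congrArg (Int.cast : ℤ → ℝ) (by omega : (dotE t s).1 = 2 * ((dotE t s).1/2))
  have e2 : ((dotE t s).2 : ℝ) = 2 * (((dotE t s).2 / 2 : ℤ) : ℝ) := by
    exact_mod_cast congrArg (Int.cast : ℤ → ℝ) (by omega : (dotE t s).2 = 2 * ((dotE t s).2/2))
  rw [e1, e2]; ring

/- ## Main theorem -/

/-- `H₃` has 30 elements, is centrally symmetric, consists of unit vectors,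
is closed under its reflections, and has Cartan coefficients in `ℤ + ℤφ`. -/
theorem H3_root_system :
    H3.ncard = 30 ∧
    (∀ α, α ∈ H3 ↔ -α ∈ H3) ∧
    (∀ α ∈ H3, dot3 α α = 1) ∧
    (∀ α ∈ H3, ∀ β ∈ H3, β - (2 * dot3 β α) • α ∈ H3) ∧
    (∀ α ∈ H3, ∀ β ∈ H3, 2 * dot3 β α ∈ Zφ) := by
  have hset : {v : V | v ∈ L} = ↑L.toFinset := by ext w; simp
  refine ⟨?_, ?_, ?_, ?_, ?_⟩
  · rw [H3_eq, Set.ncard_image_of_injOn (toV_inj.injOn), hset, Set.ncard_coe_finset,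
      List.toFinset_card_of_nodup L_nodup]
    decide
  · have fwd : ∀ α ∈ H3, -α ∈ H3 := by
      rw [H3_eq]
      rintro α ⟨v, hv, rfl⟩
      exact ⟨-v, L_neg v hv, (toV_neg v).symm⟩
    intro α
    refine ⟨fwd α, fun h => ?_⟩
    have := fwd (-α) h
    simpa using this
  · rw [H3_eq]
    rintro α ⟨v, hv, rfl⟩
    rw [dot3_toV, L_unit v hv]
    unfold toR; norm_num
  · rw [H3_eq]
    rintro α ⟨s, hs, rfl⟩ β ⟨t, ht, rfl⟩
    refine ⟨reflE s t, L_refl s hs t ht, ?_⟩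
    have key := hcd s t hs ht
    have hc : 2 * dot3 (toV t) (toV s) = toR (hdE s t) := by
      rw [dot3_toV, key]; ring
    rw [hc]
    funext j
    fin_cases j <;> simp [toV, reflE, toR_sub, toR_mul] <;> ring
  · rw [H3_eq]
    rintro α ⟨s, hs, rfl⟩ β ⟨t, ht, rfl⟩
    refine ⟨(hdE s t).1, (hdE s t).2, ?_⟩
    rw [dot3_toV, hcd s t hs ht]
    unfold toR; ring
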